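/- Let Q'_k = {x ∈ ℝ^k : x_1 > 0, …, x_k > 0} be the open first quadrant in ℝ^k and let n ∈ ℤ. Then the function n·𝟏_{Q'_k} : ℝ^k → ℤ (equal to n on Q'_k and 0 elsewhere) is a sum of signs if and only if 2^k divides n. -/

import Mathlib

open Polynomial

/-- The integer-valued sign of a real number. -/
noncomputable def sgn (r : ℝ) : ℤ := if r < 0 then -1 else if 0 < r then 1 else 0

/-- A function `φ : ℝ^n → ℤ` is a sum of signs if it is a finite sum of signs of
polynomials. -/
def IsSumOfSigns {n : ℕ} (φ : (Fin n → ℝ) → ℤ) : Prop :=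
  ∃ (s : ℕ) (g : Fin s → MvPolynomial (Fin n) ℝ),
    ∀ x, φ x = ∑ i : Fin s, sgn (MvPolynomial.eval x (g i))

lemma sgn_zero : sgn 0 = 0 := by simp [sgn]
lemma sgn_one : sgn 1 = 1 := by simp [sgn]
lemma sgn_of_pos {r : ℝ} (h : 0 < r) : sgn r = 1 := by simp [sgn, h, asymm h]
lemma sgn_of_neg {r : ℝ} (h : r < 0) : sgn r = -1 := by simp [sgn, h]

lemma sgn_mul (a b : ℝ) : sgn (a * b) = sgn a * sgn b := by
  rcases lt_trichotomy a 0 with ha | ha | ha <;> rcases lt_trichotomy b 0 with hb | hb | hb <;>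
    simp [ha, hb, sgn_zero, sgn_of_pos, sgn_of_neg, mul_pos, mul_neg_of_pos_of_neg,
      mul_neg_of_neg_of_pos, mul_pos_of_neg_of_neg]

lemma sgn_pow (a : ℝ) (m : ℕ) : sgn (a ^ m) = sgn a ^ m := by
  induction m with
  | zero => simp [sgn, zero_lt_one]
  | succ m ih => rw [pow_succ, pow_succ, sgn_mul, ih]

lemma sgn_neg (a : ℝ) : sgn (-a) = - sgn a := by
  rcases lt_trichotomy a 0 with ha | ha | ha <;>
    simp [ha, sgn_zero, sgn_of_pos, sgn_of_neg, neg_pos, *]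

lemma sgn_prod {ι : Type*} (s : Finset ι) (f : ι → ℝ) :
    sgn (∏ i ∈ s, f i) = ∏ i ∈ s, sgn (f i) := by
  classical
  induction s using Finset.induction with
  | empty => simp [sgn_one]
  | insert _ _ hni ih => rw [Finset.prod_insert hni, Finset.prod_insert hni, sgn_mul, ih]

lemma sgn_of_close {a b : ℝ} (hb : b ≠ 0) (h : |a - b| < |b|) : sgn a = sgn b := by
  rcases hb.lt_or_gt with hb' | hb'
  · rw [abs_of_neg hb'] at h
    have : a < 0 := by cases abs_lt.1 h; linarith
    rw [sgn_of_neg this, sgn_of_neg hb']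
  · rw [abs_of_pos hb'] at h
    have : 0 < a := by cases abs_lt.1 h; linarith
    rw [sgn_of_pos this, sgn_of_pos hb']

lemma univar' (p : Polynomial ℝ) (m : ℕ) (hc : p.coeff m ≠ 0)
    (hlow : ∀ d < m, p.coeff d = 0) :
    ∃ t0 > (0:ℝ), ∀ t : ℝ, t ≠ 0 → |t| < t0 →
      sgn (p.eval t) = sgn t ^ m * sgn (p.coeff m) := by
  obtain ⟨r, hr⟩ : X ^ m ∣ p := X_pow_dvd_iff.2 hlow
  have hc' : r.eval 0 = p.coeff m := by
    rw [← Polynomial.coeff_zero_eq_eval_zero]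
    have h2 := Polynomial.coeff_X_pow_mul r m 0
    rw [zero_add] at h2
    rw [hr, h2]
  have hcont : ContinuousAt (fun t => r.eval t) 0 := (Polynomial.continuous r).continuousAt
  rw [Metric.continuousAt_iff] at hcont
  obtain ⟨δ, hδ, hδ'⟩ := hcont |p.coeff m| (abs_pos.2 hc)
  refine ⟨δ, hδ, fun t ht htδ => ?_⟩
  have hsr : sgn (r.eval t) = sgn (p.coeff m) := by
    apply sgn_of_close hc
    have := hδ' (x := t) (by simpa [Real.dist_eq] using htδ)
    simpa [Real.dist_eq, hc'] using this
  conv_lhs => rw [hr]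
  rw [eval_mul, eval_pow, eval_X, sgn_mul, sgn_pow, hsr]

lemma exists_avoid (t0 : ℝ) (h : 0 < t0) {B : Set ℝ} (hB : B.Finite) :
    ∃ t, 0 < t ∧ t < t0 ∧ t ∉ B := by
  obtain ⟨t, ht⟩ := ((Set.Ioo_infinite h).diff hB).nonempty
  exact ⟨t, ht.1.1, ht.1.2, ht.2⟩

lemma exists_pos_eval_ne_zero :
    ∀ (k : ℕ) (p : MvPolynomial (Fin k) ℝ), p ≠ 0 →
      ∃ x : Fin k → ℝ, (∀ i, 0 < x i) ∧ MvPolynomial.eval x p ≠ 0 := by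
  intro k
  induction k with
  | zero =>
    intro p hp
    obtain ⟨a, rfl⟩ := MvPolynomial.C_surjective (Fin 0) p
    refine ⟨fun i => i.elim0, fun i => i.elim0, ?_⟩
    rw [MvPolynomial.eval_C]
    exact fun h => hp (by rw [h, map_zero])
  | succ k IH =>
    intro p hp
    set P := MvPolynomial.finSuccEquiv ℝ k p with hPdef
    have hP : P ≠ 0 := by
      intro h
      exact hp ((MvPolynomial.finSuccEquiv ℝ k).injective (by simp [← hPdef, h]))
    have hlc : P.leadingCoeff ≠ 0 := leadingCoeff_ne_zero.2 hP
    obtain ⟨x', hx'pos, hx'⟩ := IH P.leadingCoeff hlc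
    set p' := P.map (MvPolynomial.eval x') with hp'def
    have hp' : p' ≠ 0 := fun h => hx' (by
      have := congrArg (fun q => Polynomial.coeff q P.natDegree) h
      simpa [hp'def, Polynomial.coeff_map] using this)
    obtain ⟨t, ht0, _, htB⟩ := exists_avoid 1 one_pos (Polynomial.finite_setOf_isRoot hp')
    refine ⟨Fin.cons t x', ?_, ?_⟩
    · intro i
      refine Fin.cases ?_ ?_ i <;> simp [ht0, hx'pos]
    · rw [MvPolynomial.eval_eq_eval_mv_eval']
      exact htB

lemma key : ∀ (k : ℕ) (ι κ : Type) [Fintype ι] [Fintype κ] (n : ℤ)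
    (g : ι → MvPolynomial (Fin k) ℝ) (q : κ → MvPolynomial (Fin k) ℝ),
    (∀ j, q j ≠ 0) →
    (∀ x : Fin k → ℝ, (∀ j, MvPolynomial.eval x (q j) ≠ 0) →
      (if ∀ i, 0 < x i then n else 0) = ∑ i, sgn (MvPolynomial.eval x (g i))) →
    (2:ℤ)^k ∣ n := by
  intro k
  induction k with
  | zero =>
    intro ι κ _ _ n g q hq hmain
    simpa using one_dvd n
  | succ k IH =>
    intro ι κ _ _ n g q hq hmain
    classical
    set P : ι → Polynomial (MvPolynomial (Fin k) ℝ) :=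
      fun i => MvPolynomial.finSuccEquiv ℝ k (g i) with hPdef
    set Q : κ → Polynomial (MvPolynomial (Fin k) ℝ) :=
      fun j => MvPolynomial.finSuccEquiv ℝ k (q j) with hQdef
    have hQ : ∀ j, Q j ≠ 0 := fun j h =>
      hq j ((MvPolynomial.finSuccEquiv ℝ k).injective (by simp [hQdef] at h ⊢; exact h))
    set m : ι → ℕ := fun i => (P i).natTrailingDegree with hmdef
    set h : ι → MvPolynomial (Fin k) ℝ := fun i => (P i).trailingCoeff with hhdef
    have hhne : ∀ i, g i ≠ 0 → h i ≠ 0 := by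
      intro i hgi
      have hPi : P i ≠ 0 := fun hz =>
        hgi ((MvPolynomial.finSuccEquiv ℝ k).injective (by simp [hPdef] at hz ⊢; exact hz))
      exact mt Polynomial.trailingCoeff_eq_zero.1 hPi
    set H : ι → MvPolynomial (Fin k) ℝ :=
      fun i => if g i ≠ 0 ∧ Even (m i) then h i else 0 with hHdef
    set G : ι ⊕ κ → MvPolynomial (Fin k) ℝ :=
      Sum.elim (fun i => if g i = 0 then 1 else h i) (fun j => (Q j).leadingCoeff) with hGdef
    have hG : ∀ j', G j' ≠ 0 := by
      rintro (i | j)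
      · by_cases hgi : g i = 0
        · simp [hGdef, hgi]
        · simpa [hGdef, hgi] using hhne i hgi
      · simpa [hGdef] using leadingCoeff_ne_zero.2 (hQ j)
    -- The main claim
    have claim : ∀ x' : Fin k → ℝ, (∀ j', MvPolynomial.eval x' (G j') ≠ 0) →
        (if ∀ i, 0 < x' i then n else 0) = 2 * ∑ i, sgn (MvPolynomial.eval x' (H i)) := by
      intro x' hx'
      have hh : ∀ i, g i ≠ 0 → MvPolynomial.eval x' (h i) ≠ 0 := by
        intro i hgi
        have := hx' (Sum.inl i)
        simpa [hGdef, hgi] using this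
      have hlcQ : ∀ j, MvPolynomial.eval x' ((Q j).leadingCoeff) ≠ 0 := fun j => hx' (Sum.inr j)
      -- specialized q-polynomials are nonzero with finitely many roots
      have hq' : ∀ j, (Q j).map (MvPolynomial.eval x') ≠ 0 := by
        intro j hz
        apply hlcQ j
        have := congrArg (fun p => Polynomial.coeff p ((Q j).natDegree)) hz
        simpa [Polynomial.coeff_map] using this
      have hBfin : (⋃ j, {t : ℝ | IsRoot ((Q j).map (MvPolynomial.eval x')) t}).Finite :=
        Set.finite_iUnion fun j => Polynomial.finite_setOf_isRoot (hq' j)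
      set B := ⋃ j, {t : ℝ | IsRoot ((Q j).map (MvPolynomial.eval x')) t} with hBdef
      -- sign formula for each i
      have hA : ∀ i : ι, ∃ t0 > (0:ℝ), ∀ t : ℝ, t ≠ 0 → |t| < t0 →
          sgn (MvPolynomial.eval (Fin.cons t x') (g i)) =
            (if g i = 0 then 0 else sgn t ^ m i * sgn (MvPolynomial.eval x' (h i))) := by
        intro i
        by_cases hgi : g i = 0
        · exact ⟨1, one_pos, fun t _ _ => by simp [hgi, sgn_zero]⟩
        · have hcoeff : ((P i).map (MvPolynomial.eval x')).coeff (m i) =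
              MvPolynomial.eval x' (h i) := by
            simp [Polynomial.coeff_map, hhdef, hmdef, Polynomial.trailingCoeff]
          have hc : ((P i).map (MvPolynomial.eval x')).coeff (m i) ≠ 0 := by
            rw [hcoeff]; exact hh i hgi
          have hlow : ∀ d < m i, ((P i).map (MvPolynomial.eval x')).coeff d = 0 := by
            intro d hd
            rw [Polynomial.coeff_map, Polynomial.coeff_eq_zero_of_lt_natTrailingDegree hd,
              map_zero]
          obtain ⟨t0, ht0, hform⟩ := univar' _ (m i) hc hlow
          refine ⟨t0, ht0, fun t ht htt => ?_⟩
          rw [MvPolynomial.eval_eq_eval_mv_eval', if_neg hgi, ← hcoeff]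
          exact hform t ht htt
      choose t0 ht0pos hform using hA
      -- a common small bound
      set F : Finset ℝ := insert (1:ℝ) (Finset.univ.image t0) with hFdef
      have hFne : F.Nonempty := ⟨1, by simp [hFdef]⟩
      set tm := F.min' hFne with htmdef
      have htmpos : 0 < tm := by
        apply lt_of_lt_of_le _ (le_refl tm)
        have := F.min'_mem hFne
        rw [← htmdef] at this
        simp only [hFdef, Finset.mem_insert, Finset.mem_image] at this
        rcases this with h1 | ⟨i, _, h2⟩
        · rw [h1]; exact one_pos
        · rw [← h2]; exact ht0pos i
      have htmle : ∀ i, tm ≤ t0 i := fun i =>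
        Finset.min'_le _ _ (by simp [hFdef, Finset.mem_image])
      -- choose good positive and negative t
      obtain ⟨tp, htp0, htptm, htpB⟩ := exists_avoid tm htmpos hBfin
      obtain ⟨u, hu0, hutm, huB⟩ := exists_avoid tm htmpos
        (hBfin.preimage (f := fun t : ℝ => -t) (neg_injective.injOn))
      set tn := -u with htndef
      have htnB : tn ∉ B := huB
      have hgood : ∀ t : ℝ, t ∉ B →
          ∀ j, MvPolynomial.eval (Fin.cons t x') (q j) ≠ 0 := by
        intro t htB j
        rw [MvPolynomial.eval_eq_eval_mv_eval']
        intro hz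
        exact htB (Set.mem_iUnion.2 ⟨j, hz⟩)
      have hposiff : ∀ t : ℝ, (∀ i : Fin (k+1), 0 < (Fin.cons t x' : Fin (k+1) → ℝ) i) ↔
          (0 < t ∧ ∀ i, 0 < x' i) := by
        intro t
        constructor
        · intro H0
          exact ⟨by simpa using H0 0, fun i => by simpa using H0 i.succ⟩
        · rintro ⟨h1, h2⟩ i
          rcases Fin.eq_zero_or_eq_succ i with rfl | ⟨j, rfl⟩ <;> simp [h1, h2]
      -- equation at tp
      have heqp := hmain (Fin.cons tp x') (hgood tp htpB)
      simp only [hposiff tp, and_iff_right htp0] at heqp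
      have habs_p : |tp| < tm := by rwa [abs_of_pos htp0]
      have heqp' : (if ∀ i, 0 < x' i then n else 0) =
          ∑ i, (if g i = 0 then 0 else sgn (MvPolynomial.eval x' (h i))) := by
        refine heqp.trans (Finset.sum_congr rfl fun i _ => ?_)
        rw [hform i tp (ne_of_gt htp0) (lt_of_lt_of_le habs_p (htmle i)), sgn_of_pos htp0,
          one_pow, one_mul]
      -- equation at tn
      have htn0 : tn < 0 := by rw [htndef]; linarith
      have htnabs : |tn| < tm := by rw [htndef, abs_neg, abs_of_pos hu0]; exact hutm
      have heqn := hmain (Fin.cons tn x') (hgood tn htnB)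
      simp only [hposiff tn] at heqn
      have heqn' : (0:ℤ) =
          ∑ i, (if g i = 0 then 0 else (-1) ^ m i * sgn (MvPolynomial.eval x' (h i))) := by
        rw [if_neg (by rintro ⟨h1, -⟩; exact absurd h1 (asymm htn0))] at heqn
        refine heqn.trans (Finset.sum_congr rfl fun i _ => ?_)
        rw [hform i tn (ne_of_lt htn0) (lt_of_lt_of_le htnabs (htmle i)), sgn_of_neg htn0]
      -- add the two equations
      have hsum : (if ∀ i, 0 < x' i then n else 0) =
          ∑ i, 2 * sgn (MvPolynomial.eval x' (H i)) := by
        calc (if ∀ i, 0 < x' i then n else 0)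
            = (∑ i, (if g i = 0 then 0 else sgn (MvPolynomial.eval x' (h i)))) +
              ∑ i, (if g i = 0 then 0 else (-1) ^ m i * sgn (MvPolynomial.eval x' (h i))) := by
              rw [← heqp', ← heqn', add_zero]
          _ = ∑ i, ((if g i = 0 then 0 else sgn (MvPolynomial.eval x' (h i))) +
              (if g i = 0 then 0 else (-1) ^ m i * sgn (MvPolynomial.eval x' (h i)))) := by
              rw [Finset.sum_add_distrib]
          _ = ∑ i, 2 * sgn (MvPolynomial.eval x' (H i)) := by
              refine Finset.sum_congr rfl fun i _ => ?_
              by_cases hgi : g i = 0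
              · simp [hgi, hHdef, sgn_zero]
              · rcases Nat.even_or_odd (m i) with he | ho
                · rw [if_neg hgi, if_neg hgi, he.neg_one_pow, one_mul, hHdef]
                  simp only [hgi, ne_eq, not_false_eq_true, he, and_self, if_true]
                  ring
                · rw [if_neg hgi, if_neg hgi, ho.neg_one_pow, hHdef]
                  simp only [hgi, ne_eq, not_false_eq_true, true_and,
                    Nat.not_even_iff_odd.2 ho, if_false]
                  simp [sgn_zero]
      rw [hsum, Finset.mul_sum]
    -- use the claim
    have hprodne : (∏ j' : ι ⊕ κ, G j') ≠ 0 :=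
      Finset.prod_ne_zero_iff.2 fun j' _ => hG j'
    obtain ⟨x0, hx0pos, hx0⟩ := exists_pos_eval_ne_zero k _ hprodne
    have hx0' : ∀ j', MvPolynomial.eval x0 (G j') ≠ 0 := fun j' hz =>
      hx0 (by rw [map_prod]; exact Finset.prod_eq_zero (Finset.mem_univ j') hz)
    have h2n : (2:ℤ) ∣ n := by
      have hc := claim x0 hx0'
      rw [if_pos hx0pos] at hc
      exact ⟨_, hc⟩
    obtain ⟨n', rfl⟩ := h2n
    have claim' : ∀ x' : Fin k → ℝ, (∀ j', MvPolynomial.eval x' (G j') ≠ 0) →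
        (if ∀ i, 0 < x' i then n' else 0) = ∑ i, sgn (MvPolynomial.eval x' (H i)) := by
      intro x' hx'
      have hc := claim x' hx'
      apply mul_left_cancel₀ (two_ne_zero (α := ℤ))
      rw [← hc, mul_ite, mul_zero]
    have := IH ι (ι ⊕ κ) n' H G hG claim'
    rw [pow_succ, mul_comm 2 n']
    exact mul_dvd_mul this dvd_rfl

lemma isSumOfSigns_of_fintype {n : ℕ} {ι : Type} [Fintype ι]
    (g : ι → MvPolynomial (Fin n) ℝ) (φ : (Fin n → ℝ) → ℤ)
    (hφ : ∀ x, φ x = ∑ i, sgn (MvPolynomial.eval x (g i))) : IsSumOfSigns φ := by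
  classical
  refine ⟨Fintype.card ι, g ∘ (Fintype.equivFin ι).symm, fun x => ?_⟩
  rw [hφ x]
  exact (Fintype.sum_equiv (Fintype.equivFin ι).symm _ _ fun i => rfl).symm

lemma isSumOfSigns_zero {n : ℕ} : IsSumOfSigns (fun _ : Fin n → ℝ => (0:ℤ)) :=
  ⟨0, Fin.elim0, fun x => by simp⟩

lemma isSumOfSigns_add {n : ℕ} {φ ψ : (Fin n → ℝ) → ℤ}
    (hφ : IsSumOfSigns φ) (hψ : IsSumOfSigns ψ) :
    IsSumOfSigns (fun x => φ x + ψ x) := by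
  obtain ⟨s1, g1, h1⟩ := hφ
  obtain ⟨s2, g2, h2⟩ := hψ
  refine isSumOfSigns_of_fintype (ι := Fin s1 ⊕ Fin s2) (Sum.elim g1 g2) _ fun x => ?_
  rw [h1 x, h2 x, Fintype.sum_sum_type]
  rfl

lemma isSumOfSigns_neg {n : ℕ} {φ : (Fin n → ℝ) → ℤ} (hφ : IsSumOfSigns φ) :
    IsSumOfSigns (fun x => -φ x) := by
  obtain ⟨s, g, h⟩ := hφ
  refine ⟨s, fun i => -(g i), fun x => ?_⟩
  show -φ x = _
  rw [h x, neg_eq_iff_eq_neg, ← Finset.sum_neg_distrib]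
  exact Finset.sum_congr rfl fun i _ => by rw [map_neg, sgn_neg, neg_neg]

lemma isSumOfSigns_nsmul {n : ℕ} {φ : (Fin n → ℝ) → ℤ} (hφ : IsSumOfSigns φ) (c : ℕ) :
    IsSumOfSigns (fun x => (c : ℤ) * φ x) := by
  induction c with
  | zero => simpa using isSumOfSigns_zero
  | succ c ih =>
    have := isSumOfSigns_add ih hφ
    convert this using 2 with x
    push_cast
    ring

lemma isSumOfSigns_zsmul {n : ℕ} {φ : (Fin n → ℝ) → ℤ} (hφ : IsSumOfSigns φ) (c : ℤ) :
    IsSumOfSigns (fun x => c * φ x) := by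
  rcases le_or_gt 0 c with hc | hc
  · obtain ⟨d, rfl⟩ := Int.eq_ofNat_of_zero_le hc
    exact isSumOfSigns_nsmul hφ d
  · have h1 := isSumOfSigns_neg (isSumOfSigns_nsmul hφ (-c).toNat)
    convert h1 using 2 with x
    rw [Int.toNat_of_nonneg (by omega)]
    ring

lemma isSumOfSigns_two_pow_indicator (k : ℕ) :
    IsSumOfSigns (fun x : Fin k → ℝ => if ∀ i, 0 < x i then (2:ℤ)^k else 0) := by
  classical
  refine isSumOfSigns_of_fintype (ι := Fin k → Bool)
    (fun e => ∏ i, (MvPolynomial.X i) ^ (if e i then 2 else 1)) _ fun x => ?_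
  have hterm : ∀ e : Fin k → Bool,
      sgn (MvPolynomial.eval x (∏ i, (MvPolynomial.X i) ^ (if e i then 2 else 1))) =
        ∏ i, (if e i then sgn (x i) ^ 2 else sgn (x i)) := by
    intro e
    rw [map_prod, sgn_prod]
    refine Finset.prod_congr rfl fun i _ => ?_
    rw [map_pow, MvPolynomial.eval_X, sgn_pow]
    split <;> simp
  rw [Finset.sum_congr rfl fun e _ => hterm e]
  have hswap : ∑ e : Fin k → Bool, ∏ i, (if e i then sgn (x i) ^ 2 else sgn (x i)) =
      ∏ i, ∑ b : Bool, (if b then sgn (x i) ^ 2 else sgn (x i)) := by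
    rw [Finset.prod_univ_sum]
    refine Finset.sum_nbij' (fun e => e) (fun e => e) ?_ ?_ ?_ ?_ ?_ <;>
      simp [Fintype.mem_piFinset]
  rw [hswap]
  have hfac : ∀ i, (∑ b : Bool, (if b then sgn (x i) ^ 2 else sgn (x i))) =
      if 0 < x i then 2 else 0 := by
    intro i
    rcases lt_trichotomy (x i) 0 with hx | hx | hx
    · simp [sgn_of_neg hx, asymm hx]
    · simp [hx, sgn_zero]
    · simp [sgn_of_pos hx, hx]
  rw [Finset.prod_congr rfl fun i _ => hfac i]
  by_cases hpos : ∀ i, 0 < x i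
  · rw [if_pos hpos, Finset.prod_congr rfl fun i _ => if_pos (hpos i)]
    simp
  · push_neg at hpos
    obtain ⟨i0, hi0⟩ := hpos
    rw [if_neg (by push_neg; exact ⟨i0, hi0⟩)]
    exact (Finset.prod_eq_zero (Finset.mem_univ i0) (by rw [if_neg (not_lt.2 hi0)])).symm

theorem sumOfSigns_open_quadrant_iff (k : ℕ) (n : ℤ) :
    IsSumOfSigns (fun x : Fin k → ℝ => if ∀ i, 0 < x i then n else 0) ↔
      (2 : ℤ) ^ k ∣ n := by
  constructor
  · rintro ⟨s, g, hg⟩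
    exact key k (Fin s) (Fin 0) n g Fin.elim0 (fun j => j.elim0) fun x _ => hg x
  · rintro ⟨c, rfl⟩
    have := isSumOfSigns_zsmul (isSumOfSigns_two_pow_indicator k) c
    convert this using 2 with x
    rw [mul_ite, mul_zero]
    ring_nf
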